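/- Let 0 ≤ h_p ≤ 1, 0 < h_d < 1, let R = diag(r₁,…,r_N) with 0 < r_i ≤ r̄ for all i, and let E = diag(1, q, …, q^{N−1}) with q = (1−h_d)/(1+h_d). Then there exists a nonzero x ∈ ℝ^N with ‖E(B + h_p⟨B⟩)RBᵀ x‖₂ ≤ 4r̄·((1−h_d)/(1+h_d))^{N−1}·‖x‖₂; that is, the smallest singular value of E(B + h_p⟨B⟩)RBᵀ is at most 4r̄·((1−h_d)/(1+h_d))^{N−1}, and hence decays exponentially in N. -/

import Mathlib

open Matrix MeasureTheory Real

/-- The N×N matrix with 1 on the diagonal and -1 on the first superdiagonal. -/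
noncomputable def Bmat (N : ℕ) : Matrix (Fin N) (Fin N) ℝ :=
  Matrix.of fun i j => if j = i then 1 else if (j : ℕ) = (i : ℕ) + 1 then -1 else 0

/-- Entrywise absolute value of `Bmat N`. -/
noncomputable def absB (N : ℕ) : Matrix (Fin N) (Fin N) ℝ :=
  Matrix.of fun i j => |Bmat N i j|

/-- Euclidean norm of a vector in ℝ^N. -/
noncomputable def norm2 {N : ℕ} (x : Fin N → ℝ) : ℝ := Real.sqrt (x ⬝ᵥ x)

/-- The Hamiltonian H(p, Δ) = ½(p − v₀M𝟙)ᵀ M⁻¹ (p − v₀M𝟙) + ½ Δᵀ A Δ. -/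
noncomputable def Ham {N : ℕ} (v0 : ℝ) (m a : Fin N → ℝ) (p Δ : Fin N → ℝ) : ℝ :=
  (1/2) * ((p - v0 • (Matrix.diagonal m *ᵥ fun _ => 1)) ⬝ᵥ
      (Matrix.diagonal (fun i => (m i)⁻¹) *ᵥ (p - v0 • (Matrix.diagonal m *ᵥ fun _ => 1)))) +
  (1/2) * (Δ ⬝ᵥ (Matrix.diagonal a *ᵥ Δ))

lemma aux_shift_sum {N : ℕ} (g : Fin N → ℝ) (j : Fin N) :
    (∑ i : Fin N, if (j : ℕ) = (i : ℕ) + 1 then g i else 0) =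
    if h : 0 < (j : ℕ) then g ⟨(j : ℕ) - 1, by omega⟩ else 0 := by
  split_ifs with h
  · refine Finset.sum_eq_single_of_mem ⟨(j : ℕ) - 1, by omega⟩ (Finset.mem_univ _) ?_ |>.trans ?_
    · intro i _ hi
      rw [if_neg]
      intro hc
      exact hi (Fin.ext (show (i : ℕ) = (j : ℕ) - 1 by omega))
    · rw [if_pos (by simp; omega)]
  · refine Finset.sum_eq_zero fun i _ => ?_
    rw [if_neg (by omega)]

theorem stmt_17 (N : ℕ) (hN : 1 ≤ N) (hp hd : ℝ) (hhp0 : 0 ≤ hp) (hhp1 : hp ≤ 1)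
    (hhd0 : 0 < hd) (hhd1 : hd < 1)
    (rbar : ℝ) (r : Fin N → ℝ) (hr : ∀ i, 0 < r i ∧ r i ≤ rbar) :
    ∃ x : Fin N → ℝ, x ≠ 0 ∧
      norm2 ((Matrix.diagonal (fun i : Fin N => ((1 - hd) / (1 + hd)) ^ (i : ℕ)) *
          ((Bmat N + hp • absB N) * Matrix.diagonal r * (Bmat N)ᵀ)) *ᵥ x)
        ≤ 4 * rbar * ((1 - hd) / (1 + hd)) ^ (N - 1) * norm2 x := by
  set q : ℝ := (1 - hd) / (1 + hd) with hqdef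
  have hq0 : 0 < q := div_pos (by linarith) (by linarith)
  have hp1 : (0:ℝ) < 1 + hp := by linarith
  have hp2 : (0:ℝ) ≤ 1 - hp := by linarith
  -- the last index
  have hNlt : N - 1 < N := by omega
  set iN : Fin N := ⟨N - 1, hNlt⟩ with hiN
  have hrbar : 0 < rbar := lt_of_lt_of_le (hr iN).1 (hr iN).2
  -- the vector y
  set y : ℕ → ℝ := fun k => (1 + hp) ^ k * (1 - hp) ^ (N - 1 - k) with hy
  have hy_nonneg : ∀ k, 0 ≤ y k := fun k => mul_nonneg (by positivity) (by positivity)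
  set f : ℕ → ℝ := fun k => if h : k < N then y k / r ⟨k, h⟩ else 0 with hf
  have hf_nonneg : ∀ k, 0 ≤ f k := by
    intro k
    rw [hf]
    dsimp only
    split_ifs with h
    · exact div_nonneg (hy_nonneg k) (hr ⟨k, h⟩).1.le
    · exact le_refl 0
  set x : Fin N → ℝ := fun j => ∑ k ∈ Finset.range ((j : ℕ) + 1), f k with hx
  have hx_nonneg : ∀ j, 0 ≤ x j := fun j =>
    Finset.sum_nonneg fun k _ => hf_nonneg k
  -- x at the last index is at least f (N-1)
  have hflast : f (N - 1) = y (N - 1) / r iN := by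
    simp only [hf]
    rw [dif_pos hNlt]
  have hylast : y (N - 1) = (1 + hp) ^ (N - 1) := by rw [hy]; simp
  have hxlast : f (N - 1) ≤ x iN := by
    rw [hx]
    refine Finset.single_le_sum (fun k _ => hf_nonneg k) ?_
    simp [hiN]
  have hfpos : 0 < f (N - 1) := by
    rw [hflast, hylast]
    exact div_pos (pow_pos hp1 _) (hr iN).1
  refine ⟨x, ?_, ?_⟩
  · intro h0
    have := congrFun h0 iN
    simp only [Pi.zero_apply] at this
    linarith [lt_of_lt_of_le hfpos hxlast]
  -- compute the matrix-vector product
  have step1 : (Bmat N)ᵀ *ᵥ x = fun j : Fin N => f (j : ℕ) := by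
    funext j
    have : ((Bmat N)ᵀ *ᵥ x) j = ∑ i : Fin N,
        ((if j = i then x i else 0) + (if (j : ℕ) = (i : ℕ) + 1 then -x i else 0)) := by
      simp only [Matrix.mulVec, dotProduct, Matrix.transpose_apply, Bmat, Matrix.of_apply]
      refine Finset.sum_congr rfl fun i _ => ?_
      by_cases h1 : j = i
      · subst h1
        simp [show ¬((j : ℕ) = (j : ℕ) + 1) by omega]
      · simp only [if_neg h1]
        by_cases h2 : (j : ℕ) = (i : ℕ) + 1
        · simp only [if_pos h2]; ring
        · simp only [if_neg h2]; ring
    rw [this, Finset.sum_add_distrib]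
    simp only [Finset.sum_ite_eq, Finset.sum_ite_eq', Finset.mem_univ, if_true]
    rw [aux_shift_sum]
    split_ifs with h
    · -- x j - x (j-1) = f j
      rw [hx]
      simp only
      have : (j : ℕ) - 1 + 1 = (j : ℕ) := by omega
      rw [this, Finset.sum_range_succ]
      ring
    · -- j = 0 : x 0 = f 0
      have : (j : ℕ) = 0 := by omega
      rw [hx]
      simp [this]
  have step2 : Matrix.diagonal r *ᵥ (fun j : Fin N => f (j : ℕ)) = fun j : Fin N => y (j : ℕ) := by
    funext j
    rw [Matrix.mulVec_diagonal, hf]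
    dsimp only
    rw [dif_pos j.isLt]
    field_simp [(hr j).1.ne']
  have step3 : (Bmat N + hp • absB N) *ᵥ (fun j : Fin N => y (j : ℕ)) =
      fun i : Fin N => if i = iN then (1 + hp) ^ N else 0 := by
    funext i
    have expand : ((Bmat N + hp • absB N) *ᵥ fun j : Fin N => y (j : ℕ)) i =
        ∑ j : Fin N, ((if i = j then (1 + hp) * y (j : ℕ) else 0) +
          (if (j : ℕ) = (i : ℕ) + 1 then (hp - 1) * y (j : ℕ) else 0)) := by
      simp only [Matrix.mulVec, dotProduct, Matrix.add_apply, Matrix.smul_apply,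
        Bmat, absB, Matrix.of_apply, smul_eq_mul]
      refine Finset.sum_congr rfl fun j _ => ?_
      by_cases h1 : j = i
      · subst h1
        simp [show ¬((j : ℕ) = (j : ℕ) + 1) by omega]
      · simp only [if_neg h1, if_neg (Ne.symm h1)]
        by_cases h2 : (j : ℕ) = (i : ℕ) + 1
        · simp only [if_pos h2]
          rw [abs_neg, abs_one]
          ring
        · simp only [if_neg h2]
          simp
    rw [expand, Finset.sum_add_distrib]
    simp only [Finset.sum_ite_eq, Finset.sum_ite_eq', Finset.mem_univ, if_true]
    -- second sum: over j with (j:ℕ) = i+1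
    have key : (∑ j : Fin N, if (j : ℕ) = (i : ℕ) + 1 then (hp - 1) * y (j : ℕ) else 0) =
        if h : (i : ℕ) + 1 < N then (hp - 1) * y ((i : ℕ) + 1) else 0 := by
      split_ifs with h
      · refine Finset.sum_eq_single_of_mem ⟨(i : ℕ) + 1, h⟩ (Finset.mem_univ _) ?_ |>.trans ?_
        · intro j _ hj
          rw [if_neg]
          intro hc
          exact hj (Fin.ext (by simpa using hc))
        · rw [if_pos (by simp)]
      · refine Finset.sum_eq_zero fun j _ => ?_
        rw [if_neg (by omega)]
    rw [key]
    by_cases hlast : i = iN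
    · have hi1 : (i : ℕ) = N - 1 := by rw [hlast]
      rw [dif_neg (by omega), if_pos hlast]
      simp only [hi1]
      rw [hylast, add_zero, ← pow_succ']
      congr 1
      omega
    · have hi1 : (i : ℕ) + 1 < N := by
        rcases lt_or_eq_of_le (Nat.succ_le_of_lt i.isLt) with h | h
        · exact h
        · exact absurd (Fin.ext (by omega : (i : ℕ) = N - 1)) hlast
      rw [dif_pos hi1, if_neg hlast, hy]
      simp only
      have h1 : N - 1 - (i : ℕ) = (N - 1 - ((i : ℕ) + 1)) + 1 := by omega
      rw [h1, pow_succ]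
      ring
  have step4 : Matrix.diagonal (fun i : Fin N => q ^ (i : ℕ)) *ᵥ
      (fun i : Fin N => if i = iN then (1 + hp) ^ N else 0) =
      fun i : Fin N => if i = iN then q ^ (N - 1) * (1 + hp) ^ N else 0 := by
    funext i
    rw [Matrix.mulVec_diagonal]
    by_cases h : i = iN
    · rw [if_pos h, if_pos h, h]
    · rw [if_neg h, if_neg h, mul_zero]
  have hmv : (Matrix.diagonal (fun i : Fin N => q ^ (i : ℕ)) *
        ((Bmat N + hp • absB N) * Matrix.diagonal r * (Bmat N)ᵀ)) *ᵥ x =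
      fun i : Fin N => if i = iN then q ^ (N - 1) * (1 + hp) ^ N else 0 := by
    rw [← Matrix.mulVec_mulVec, ← Matrix.mulVec_mulVec, ← Matrix.mulVec_mulVec,
      step1, step2, step3, step4]
  rw [hmv]
  -- compute the norm of the indicator vector
  have hc : (0:ℝ) ≤ q ^ (N - 1) * (1 + hp) ^ N := by positivity
  have hnorm1 : norm2 (fun i : Fin N => if i = iN then q ^ (N - 1) * (1 + hp) ^ N else 0) =
      q ^ (N - 1) * (1 + hp) ^ N := by
    rw [norm2]
    have : ((fun i : Fin N => if i = iN then q ^ (N - 1) * (1 + hp) ^ N else 0) ⬝ᵥ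
        (fun i : Fin N => if i = iN then q ^ (N - 1) * (1 + hp) ^ N else 0)) =
        (q ^ (N - 1) * (1 + hp) ^ N) ^ 2 := by
      simp only [dotProduct, ite_mul, zero_mul, mul_ite, mul_zero]
      rw [Finset.sum_ite_eq', if_pos (Finset.mem_univ iN)]
      simp
      ring
    rw [this, Real.sqrt_sq hc]
  rw [hnorm1]
  -- lower bound on norm2 x
  have hx_lb : (1 + hp) ^ (N - 1) / rbar ≤ norm2 x := by
    have h1 : (1 + hp) ^ (N - 1) / rbar ≤ f (N - 1) := by
      rw [hflast, hylast]
      exact div_le_div_of_nonneg_left (by positivity) (hr iN).1 (hr iN).2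
    have h2 : x iN ≤ norm2 x := by
      rw [norm2]
      have hsq : (x iN) ^ 2 ≤ x ⬝ᵥ x := by
        rw [dotProduct]
        have h3 := Finset.single_le_sum (f := fun i => x i * x i)
          (fun i _ => mul_self_nonneg (x i)) (Finset.mem_univ iN)
        nlinarith [h3]
      calc x iN = Real.sqrt ((x iN) ^ 2) := (Real.sqrt_sq (hx_nonneg iN)).symm
        _ ≤ Real.sqrt (x ⬝ᵥ x) := Real.sqrt_le_sqrt hsq
    linarith [hxlast, h1, h2]
  -- final inequality
  have hqpow : (0:ℝ) < q ^ (N - 1) := pow_pos hq0 _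
  have hNsplit : (1 + hp) ^ N = (1 + hp) ^ (N - 1) * (1 + hp) := by
    rw [← pow_succ]
    congr 1
    omega
  have hfinal : (1 + hp) ^ N ≤ 4 * rbar * norm2 x := by
    rw [div_le_iff₀ hrbar] at hx_lb
    nlinarith [pow_pos hp1 (N - 1), hx_lb, hNsplit]
  calc q ^ (N - 1) * (1 + hp) ^ N ≤ q ^ (N - 1) * (4 * rbar * norm2 x) :=
        mul_le_mul_of_nonneg_left hfinal hqpow.le
    _ = 4 * rbar * q ^ (N - 1) * norm2 x := by ring
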